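/- Let D = (E, F) be a delta-matroid and e ∈ E of type uu (e lies in no feasible set of size r(D_min) or r(D_min)+1, and e lies in every feasible set of size r(D_max) or r(D_max)−1). Then w(D^{*|e}) = w(D) − 2 and w(D^{×|e}) = w(D). -/
import Mathlib


open Finset Polynomial

variable {α : Type*} [DecidableEq α]

/-- The twist of a collection of feasible sets with respect to `A`. -/
noncomputable def SS.twist (A : Finset α) (F : Finset (Finset α)) : Finset (Finset α) :=
  F.image (fun X => symmDiff A X)

/-- Loop complementation at a single element `e`. -/
noncomputable def SS.lc (e : α) (F : Finset (Finset α)) : Finset (Finset α) :=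
  symmDiff F ((F.filter (fun X => e ∉ X)).image (insert e))

/-- The two generating operations: twist `*` and loop complementation `×`. -/
inductive SS.Op | star | cross

/-- Apply a single operation at a single element. -/
noncomputable def SS.opElem : SS.Op → α → Finset (Finset α) → Finset (Finset α)
  | .star, e, F => SS.twist {e} F
  | .cross, e, F => SS.lc e F

/-- Apply a word in `{*, ×}` at a single element. -/
noncomputable def SS.wordElem (w : List SS.Op) (e : α) (F : Finset (Finset α)) : Finset (Finset α) :=
  w.foldl (fun F o => SS.opElem o e F) F

/-- Apply a word in `{*, ×}` elementwise on a subset `A`. -/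
noncomputable def SS.wordOn (w : List SS.Op) (A : Finset α) (F : Finset (Finset α)) : Finset (Finset α) :=
  A.toList.foldl (fun F e => SS.wordElem w e F) F

/-- Size of a largest feasible set. -/
noncomputable def SS.rmax (F : Finset (Finset α)) : ℕ := F.sup Finset.card

/-- Size of a smallest feasible set. -/
noncomputable def SS.rmin (F : Finset (Finset α)) : ℕ := sInf (Finset.card '' (F : Set (Finset α)))

/-- The width of a set system. -/
noncomputable def SS.width (F : Finset (Finset α)) : ℕ := SS.rmax F - SS.rmin F

/-- The minimum-cardinality feasible sets. -/
noncomputable def SS.Fmin (F : Finset (Finset α)) : Finset (Finset α) :=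
  F.filter (fun X => X.card = SS.rmin F)

/-- The maximum-cardinality feasible sets. -/
noncomputable def SS.Fmax (F : Finset (Finset α)) : Finset (Finset α) :=
  F.filter (fun X => X.card = SS.rmax F)

/-- The partial-`w` polynomial of a set system with ground set `E`. -/
noncomputable def SS.poly (w : List SS.Op) (E : Finset α) (F : Finset (Finset α)) :
    Polynomial ℤ :=
  ∑ A ∈ E.powerset, (Polynomial.X : Polynomial ℤ) ^ SS.width (SS.wordOn w A F)

/-- A proper set system satisfying the symmetric exchange axiom. -/
noncomputable def SS.IsDeltaMatroid (F : Finset (Finset α)) : Prop :=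
  F.Nonempty ∧ ∀ X ∈ F, ∀ Y ∈ F, ∀ u ∈ symmDiff X Y,
    ∃ v ∈ symmDiff X Y, symmDiff X {u, v} ∈ F

/-- Apply a sequence of single-element twists and loop complementations. -/
noncomputable def SS.seqApply : List (SS.Op × α) → Finset (Finset α) → Finset (Finset α)
  | [], F => F
  | (o, e) :: s, F => SS.seqApply s (SS.opElem o e F)

/-- A set system is vf-safe if every sequence of single-element twists and loop
complementations yields a delta-matroid. -/
noncomputable def SS.VfSafe (F : Finset (Finset α)) : Prop :=
  ∀ s : List (SS.Op × α), SS.IsDeltaMatroid (SS.seqApply s F)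

/-- The direct sum of two set systems. -/
noncomputable def SS.dsum (F F' : Finset (Finset α)) : Finset (Finset α) :=
  (F ×ˢ F').image (fun p => p.1 ∪ p.2)


lemma card_symmDiff_singleton' (e : α) (X : Finset α) :
    (symmDiff ({e} : Finset α) X).card = if e ∈ X then X.card - 1 else X.card + 1 := by
  split
  next h =>
    have : symmDiff ({e} : Finset α) X = X.erase e := by
      ext a; by_cases ha : a = e <;> simp [Finset.mem_symmDiff, ha, h]
    rw [this, Finset.card_erase_of_mem h]
  next h =>
    have : symmDiff ({e} : Finset α) X = insert e X := by
      ext a; by_cases ha : a = e <;> simp [Finset.mem_symmDiff, ha, h]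
    rw [this, Finset.card_insert_of_notMem h]


open SS

theorem stmt16 (F : Finset (Finset α)) (hD : SS.IsDeltaMatroid F) (e : α)
    (hu1 : ∀ A ∈ F, A.card ≤ SS.rmin F + 1 → e ∉ A)
    (hu2 : ∀ B ∈ F, SS.rmax F ≤ B.card + 1 → e ∈ B) :
    SS.width (SS.twist {e} F) + 2 = SS.width F ∧
    SS.width (SS.lc e F) = SS.width F := by
  obtain ⟨hne, -⟩ := hD
  set m := SS.rmin F with hm
  set M := SS.rmax F with hM
  -- a minimum set
  have hmem : ∃ X ∈ F, X.card = m := by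
    have h1 : (Finset.card '' (F : Set (Finset α))).Nonempty := by
      obtain ⟨X, hX⟩ := hne; exact ⟨X.card, X, hX, rfl⟩
    have := Nat.sInf_mem h1
    obtain ⟨X, hX, hXc⟩ := this
    exact ⟨X, hX, hXc⟩
  obtain ⟨F0, hF0, hF0c⟩ := hmem
  obtain ⟨Fm, hFm, hFmc⟩ := Finset.exists_mem_eq_sup F hne Finset.card
  have hFmc : Fm.card = M := hFmc.symm
  have hlow : ∀ X ∈ F, m ≤ X.card := fun X hX =>
    Nat.sInf_le ⟨X, hX, rfl⟩
  have hhigh : ∀ X ∈ F, X.card ≤ M := fun X hX => Finset.le_sup hX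
  -- e not in F0
  have heF0 : e ∉ F0 := hu1 F0 hF0 (by omega)
  have heFm : e ∈ Fm := hu2 Fm hFm (by omega)
  -- width at least 2
  have hgap : m + 2 ≤ M := by
    by_contra h
    push_neg at h
    have : e ∈ F0 := hu2 F0 hF0 (by omega)
    exact heF0 this
  -- card of sets containing e is ≥ m+2, not containing e ≤ M-2
  have hin : ∀ X ∈ F, e ∈ X → m + 2 ≤ X.card := by
    intro X hX heX
    by_contra h
    push_neg at h
    exact hu1 X hX (by omega) heX
  have hout : ∀ X ∈ F, e ∉ X → X.card + 2 ≤ M := by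
    intro X hX heX
    by_contra h
    push_neg at h
    exact heX (hu2 X hX (by omega))
  -- twist rmax
  have htmax : SS.rmax (SS.twist {e} F) = M - 1 := by
    apply le_antisymm
    · apply Finset.sup_le
      intro Y hY
      simp only [SS.twist, Finset.mem_image] at hY
      obtain ⟨X, hX, rfl⟩ := hY
      rw [card_symmDiff_singleton']
      split
      next h => have := hhigh X hX; omega
      next h => have := hout X hX h; omega
    · have : symmDiff {e} Fm ∈ SS.twist {e} F :=
        Finset.mem_image_of_mem _ hFm
      have hc : (symmDiff ({e} : Finset α) Fm).card = M - 1 := by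
        rw [card_symmDiff_singleton', if_pos heFm, hFmc]
      calc M - 1 = (symmDiff ({e} : Finset α) Fm).card := hc.symm
        _ ≤ _ := Finset.le_sup this
  have htmin : SS.rmin (SS.twist {e} F) = m + 1 := by
    have hmem2 : symmDiff ({e} : Finset α) F0 ∈ SS.twist {e} F :=
      Finset.mem_image_of_mem _ hF0
    have hc : (symmDiff ({e} : Finset α) F0).card = m + 1 := by
      rw [card_symmDiff_singleton', if_neg heF0, hF0c]
    apply le_antisymm
    · exact hc ▸ Nat.sInf_le ⟨_, hmem2, rfl⟩
    · refine le_csInf ⟨_, Set.mem_image_of_mem _ (Finset.mem_coe.mpr hmem2)⟩ ?_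
      rintro n ⟨Y, hY, rfl⟩
      simp only [Finset.mem_coe, SS.twist, Finset.mem_image] at hY
      obtain ⟨X, hX, rfl⟩ := hY
      rw [card_symmDiff_singleton']
      split
      next h => have := hin X hX h; omega
      next h => have := hlow X hX; omega
  -- lc analysis
  set S := (F.filter (fun X => e ∉ X)).image (insert e) with hS
  have hmemlc : ∀ Y : Finset α, Y ∈ SS.lc e F ↔
      (Y ∈ F ∧ Y ∉ S) ∨ (Y ∈ S ∧ Y ∉ F) := by
    intro Y; rw [SS.lc, Finset.mem_symmDiff]
  have hSmem : ∀ Y : Finset α, Y ∈ S ↔ ∃ X ∈ F, e ∉ X ∧ insert e X = Y := by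
    intro Y
    simp only [hS, Finset.mem_image, Finset.mem_filter]
    constructor
    · rintro ⟨X, ⟨hX, he⟩, rfl⟩; exact ⟨X, hX, he, rfl⟩
    · rintro ⟨X, hX, he, rfl⟩; exact ⟨X, ⟨hX, he⟩, rfl⟩
  have hcardlc : ∀ Y ∈ SS.lc e F, m ≤ Y.card ∧ Y.card ≤ M := by
    intro Y hY
    rw [hmemlc] at hY
    rcases hY with ⟨hYF, -⟩ | ⟨hYS, -⟩
    · exact ⟨hlow Y hYF, hhigh Y hYF⟩
    · rw [hSmem] at hYS
      obtain ⟨X, hX, he, rfl⟩ := hYS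
      rw [Finset.card_insert_of_notMem he]
      have h1 := hlow X hX
      have h2 := hout X hX he
      omega
  have hF0lc : F0 ∈ SS.lc e F := by
    rw [hmemlc]
    left
    refine ⟨hF0, ?_⟩
    rw [hSmem]
    rintro ⟨X, hX, he, rfl⟩
    exact heF0 (Finset.mem_insert_self e X)
  have hFmlc : Fm ∈ SS.lc e F := by
    rw [hmemlc]
    left
    refine ⟨hFm, ?_⟩
    rw [hSmem]
    rintro ⟨X, hX, he, hins⟩
    have : X.card + 1 = M := by
      rw [← hins, Finset.card_insert_of_notMem he] at hFmc; omega
    have := hout X hX he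
    omega
  have hlmax : SS.rmax (SS.lc e F) = M := by
    apply le_antisymm
    · exact Finset.sup_le fun Y hY => (hcardlc Y hY).2
    · exact hFmc ▸ Finset.le_sup hFmlc
  have hlmin : SS.rmin (SS.lc e F) = m := by
    apply le_antisymm
    · exact hF0c ▸ Nat.sInf_le ⟨_, hF0lc, rfl⟩
    · refine le_csInf ⟨_, Set.mem_image_of_mem _ (Finset.mem_coe.mpr hF0lc)⟩ ?_
      rintro n ⟨Y, hY, rfl⟩
      exact (hcardlc Y hY).1
  constructor
  · rw [SS.width, htmax, htmin, SS.width, ← hm, ← hM]; omega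
  · rw [SS.width, hlmax, hlmin, SS.width, ← hm, ← hM]
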